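/- arXiv:1906.07694 — 4 statements merged into one kernel-verified Lean document; each statement's English description precedes it below -/
import Mathlib

section
/- Every DS-surjection of arity k and degree m satisfies m ≤ k − 1. (In other words, the cells of highest dimension of the cacti complex 𝒞_k have dimension k − 1.) -/
/-- A DS-surjection of arity `k` and degree `m`: a surjective map
`f : {1,…,m+k} → {1,…,k}` (encoded with 0-indexed `Fin`s) such that
(i) consecutive values differ, and (ii) there are no indices `a < b < c < d`
with `f a = f c ≠ f b = f d` (the complexity condition). These index the
`m`-dimensional cells of the cacti complex `𝒞_k`. -/
def IsDSSurjection (k m : ℕ) (f : Fin (m + k) → Fin k) : Prop :=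
  Function.Surjective f ∧
  (∀ a : ℕ, ∀ ha : a + 1 < m + k, f ⟨a, by omega⟩ ≠ f ⟨a + 1, ha⟩) ∧
  ¬∃ a b c d : Fin (m + k), a < b ∧ b < c ∧ c < d ∧ f a = f c ∧ f b = f d ∧ f a ≠ f b

/-- Every DS-surjection of arity `k ≥ 1` and degree `m` satisfies `m ≤ k - 1`. -/
theorem degree_le_arity_sub_one (k m : ℕ) (hk : 1 ≤ k)
    (f : Fin (m + k) → Fin k) (hf : IsDSSurjection k m f) :
    m ≤ k - 1 := by
  classical
  obtain ⟨hsurj, hadj, hcplx⟩ := hf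
  have pat : ∀ a b c d : Fin (m + k), a < b → b < c → c < d →
      f a = f c → f b = f d → f a = f b := by
    intro a b c d h1 h2 h3 h4 h5
    by_contra h
    exact hcplx ⟨a, b, c, d, h1, h2, h3, h4, h5, h⟩
  have hocc : ∀ v : Fin k,
      (Finset.univ.filter (fun i : Fin (m + k) => f i = v)).Nonempty := by
    intro v; obtain ⟨i, hi⟩ := hsurj v; exact ⟨i, by simp [hi]⟩
  -- first and last occurrence of each value
  set fo : Fin k → Fin (m + k) :=
    fun v => (Finset.univ.filter (fun i => f i = v)).min' (hocc v) with hfo_def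
  set lo : Fin k → Fin (m + k) :=
    fun v => (Finset.univ.filter (fun i => f i = v)).max' (hocc v) with hlo_def
  have hfo_mem : ∀ v, f (fo v) = v := by
    intro v
    have := Finset.min'_mem _ (hocc v)
    simpa [hfo_def] using this
  have hfo_le : ∀ v i, f i = v → fo v ≤ i := by
    intro v i hi
    exact Finset.min'_le _ _ (by simp [hi])
  have hlo_mem : ∀ v, f (lo v) = v := by
    intro v
    have := Finset.max'_mem _ (hocc v)
    simpa [hlo_def] using this
  have hlo_ge : ∀ v i, f i = v → i ≤ lo v := by
    intro v i hi
    exact Finset.le_max' _ _ (by simp [hi])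
  -- set of positions having a later occurrence of the same value
  set T : Finset (Fin (m + k)) :=
    Finset.univ.filter (fun p => ∃ q, p < q ∧ f q = f p) with hT_def
  -- next occurrence
  have hTne : ∀ p ∈ T, (Finset.univ.filter (fun q => p < q ∧ f q = f p)).Nonempty := by
    intro p hp
    rw [hT_def, Finset.mem_filter] at hp
    obtain ⟨q, hq1, hq2⟩ := hp.2
    exact ⟨q, by simp [hq1, hq2]⟩
  have hnx : ∀ p ∈ T, ∃ q : Fin (m + k), p < q ∧ f q = f p ∧
      (∀ r, p < r → f r = f p → q ≤ r) := by
    intro p hp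
    refine ⟨(Finset.univ.filter (fun q => p < q ∧ f q = f p)).min' (hTne p hp), ?_, ?_, ?_⟩
    · have := Finset.min'_mem _ (hTne p hp)
      simp only [Finset.mem_filter] at this
      exact this.2.1
    · have := Finset.min'_mem _ (hTne p hp)
      simp only [Finset.mem_filter] at this
      exact this.2.2
    · intro r h1 h2
      exact Finset.min'_le _ _ (by simp [h1, h2])
  choose nx hnx1 hnx2 hnx3 using hnx
  -- Lemma A: any value occurring strictly inside a gap first-occurs strictly inside it
  have lemA : ∀ p (hp : p ∈ T), ∀ y : Fin (m + k), p < y → y < nx p hp →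
      p < fo (f y) ∧ fo (f y) < nx p hp := by
    intro p hp y h1 h2
    have hne : f y ≠ f p := by
      intro h
      exact absurd (hnx3 p hp y h1 h) (not_le.mpr h2)
    have hle : fo (f y) ≤ y := hfo_le _ _ rfl
    have hnep : fo (f y) ≠ p := by
      intro h
      apply hne
      have := hfo_mem (f y)
      rw [h] at this
      exact this.symm
    have hgt : p < fo (f y) := by
      rcases lt_trichotomy (fo (f y)) p with h | h | h
      · exfalso
        have := pat (fo (f y)) p y (nx p hp) h h1 h2 (hfo_mem (f y)) (hnx2 p hp).symm
        rw [hfo_mem (f y)] at this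
        exact hne (this.symm ▸ this)
      · exact absurd h hnep
      · exact h
    exact ⟨hgt, lt_of_le_of_lt hle h2⟩
  -- the gap after p contains a first-occurrence position
  have hGne : ∀ p (hp : p ∈ T),
      (Finset.univ.filter (fun x : Fin (m + k) => p < x ∧ x < nx p hp ∧ fo (f x) = x)).Nonempty := by
    intro p hp
    have hp1 : (p : ℕ) + 1 < m + k := by
      have := hnx1 p hp
      have h2 := (nx p hp).isLt
      omega
    set p1 : Fin (m + k) := ⟨(p : ℕ) + 1, hp1⟩ with hp1def
    have hadj' : f p ≠ f p1 := by
      have := hadj (p : ℕ) hp1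
      simpa [hp1def] using this
    have hlt1 : p < p1 := by simp [hp1def, Fin.lt_def]
    have hlt2 : p1 < nx p hp := by
      have h1 : (p : ℕ) < (nx p hp : ℕ) := hnx1 p hp
      have h2 : ((nx p hp : ℕ)) ≠ (p : ℕ) + 1 := by
        intro h
        apply hadj'
        have he : nx p hp = p1 := Fin.ext (by simpa [hp1def] using h)
        rw [← he]
        exact (hnx2 p hp).symm
      rw [Fin.lt_def]
      simp only [hp1def]
      omega
    obtain ⟨ha, hb⟩ := lemA p hp p1 hlt1 hlt2
    refine ⟨fo (f p1), ?_⟩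
    simp only [Finset.mem_filter, Finset.mem_univ, true_and]
    refine ⟨ha, hb, ?_⟩
    rw [hfo_mem (f p1)]
  -- the injection
  set ψ : (p : Fin (m + k)) → p ∈ T → Fin (m + k) :=
    fun p hp => (Finset.univ.filter
      (fun x : Fin (m + k) => p < x ∧ x < nx p hp ∧ fo (f x) = x)).min' (hGne p hp) with hψdef
  have hψmem : ∀ p (hp : p ∈ T), p < ψ p hp ∧ ψ p hp < nx p hp ∧ fo (f (ψ p hp)) = ψ p hp := by
    intro p hp
    have := Finset.min'_mem _ (hGne p hp)
    simpa [hψdef] using this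
  have hψle : ∀ p (hp : p ∈ T), ∀ x : Fin (m + k),
      p < x → x < nx p hp → fo (f x) = x → ψ p hp ≤ x := by
    intro p hp x h1 h2 h3
    exact Finset.min'_le _ _ (by simp [h1, h2, h3])
  -- key asymmetric injectivity step
  have key : ∀ p (hp : p ∈ T), ∀ p' (hp' : p' ∈ T), p < p' → ψ p hp = ψ p' hp' → False := by
    intro p hp p' hp' hlt heq
    obtain ⟨h1, h2, h3⟩ := hψmem p hp
    obtain ⟨h1', h2', h3'⟩ := hψmem p' hp'
    rw [heq] at h1 h2 h3
    set x := ψ p' hp' with hx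
    have hfne : f p ≠ f p' := by
      intro h
      have := hnx3 p hp p' hlt h.symm
      exact absurd (lt_of_lt_of_le h2 (le_trans this (le_of_lt h1'))) (lt_irrefl x)
    have hplt : p' < nx p hp := lt_trans h1' h2
    rcases lt_trichotomy (nx p hp) (nx p' hp') with h | h | h
    · have := pat p p' (nx p hp) (nx p' hp') hlt hplt h
        (hnx2 p hp).symm (hnx2 p' hp').symm
      exact hfne this
    · apply hfne
      have e1 := hnx2 p hp
      have e2 := hnx2 p' hp'
      rw [h] at e1
      rw [← e1, ← e2]
    · -- nested: first occurrence of f p' lies in (p, nx p), before p', contradicting minimality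
      obtain ⟨ha, hb⟩ := lemA p hp p' hlt hplt
      have hfix : fo (f (fo (f p'))) = fo (f p') := by
        rw [hfo_mem (f p')]
      have hge := hψle p hp (fo (f p')) ha hb hfix
      rw [heq] at hge
      have hle' : fo (f p') ≤ p' := hfo_le _ _ rfl
      exact absurd (lt_of_le_of_lt (le_trans hge hle') h1') (lt_irrefl x)
  -- target set: first-occurrence positions other than 0
  have hzero : (0 : ℕ) < m + k := by omega
  have hfo0 : fo (f ⟨0, hzero⟩) = ⟨0, hzero⟩ := by
    have h1 := hfo_le (f ⟨0, hzero⟩) ⟨0, hzero⟩ rfl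
    exact le_antisymm h1 (by rw [Fin.le_def]; exact Nat.zero_le _)
  set S : Finset (Fin (m + k)) := (Finset.univ.image fo).erase ⟨0, hzero⟩ with hSdef
  have hmaps : ∀ p (hp : p ∈ T), ψ p hp ∈ S := by
    intro p hp
    obtain ⟨h1, h2, h3⟩ := hψmem p hp
    rw [hSdef, Finset.mem_erase]
    constructor
    · intro h
      rw [h] at h1
      rw [Fin.lt_def] at h1
      simp at h1
    · exact Finset.mem_image.mpr ⟨f (ψ p hp), Finset.mem_univ _, h3⟩
  have hinj : ∀ p (hp : p ∈ T), ∀ p' (hp' : p' ∈ T), ψ p hp = ψ p' hp' → p = p' := by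
    intro p hp p' hp' heq
    rcases lt_trichotomy p p' with h | h | h
    · exact absurd (key p hp p' hp' h heq) not_false
    · exact h
    · exact absurd (key p' hp' p hp h heq.symm) not_false
  -- totalized injection
  have hzdef : ∀ p : Fin (m + k), p ∈ T → True := fun _ _ => trivial
  set Ψ : Fin (m + k) → Fin (m + k) :=
    fun p => if h : p ∈ T then ψ p h else p with hΨdef
  have hcard : T.card ≤ S.card := by
    apply Finset.card_le_card_of_injOn Ψ
    · intro p hp
      simp only [Finset.mem_coe] at hp ⊢
      simp only [hΨdef, dif_pos hp]
      exact hmaps p hp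
    · intro p hp p' hp' heq
      simp only [Finset.mem_coe] at hp hp'
      simp only [hΨdef, dif_pos hp, dif_pos hp'] at heq
      exact hinj p hp p' hp' heq
  -- cardinality of S
  have hfoinj : Function.Injective fo := by
    intro v w h
    have h1 := hfo_mem v
    have h2 := hfo_mem w
    rw [h] at h1
    exact h1.symm.trans h2
  have hScard : S.card = k - 1 := by
    rw [hSdef, Finset.card_erase_of_mem, Finset.card_image_of_injective _ hfoinj]
    · simp
    · exact Finset.mem_image.mpr ⟨f ⟨0, hzero⟩, Finset.mem_univ _, hfo0⟩
  -- cardinality of T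
  have hloinj : Function.Injective lo := by
    intro v w h
    have h1 := hlo_mem v
    have h2 := hlo_mem w
    rw [h] at h1
    exact h1.symm.trans h2
  have hTc : Tᶜ = Finset.univ.image lo := by
    ext p
    rw [Finset.mem_compl, hT_def, Finset.mem_filter]
    constructor
    · intro h
      rw [Finset.mem_image]
      refine ⟨f p, Finset.mem_univ _, ?_⟩
      have h1 : p ≤ lo (f p) := hlo_ge _ _ rfl
      rcases eq_or_lt_of_le h1 with h2 | h2
      · exact h2.symm
      · exact absurd ⟨Finset.mem_univ _, lo (f p), h2, hlo_mem (f p)⟩ h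
    · intro h h2
      rw [Finset.mem_image] at h
      obtain ⟨v, -, rfl⟩ := h
      obtain ⟨-, q, hq1, hq2⟩ := h2
      have := hlo_ge v q (by rw [hq2, hlo_mem])
      exact absurd (lt_of_lt_of_le hq1 this) (lt_irrefl _)
  have hTcard : T.card = m := by
    have h1 : Tᶜ.card = k := by
      rw [hTc, Finset.card_image_of_injective _ hloinj]
      simp
    have h2 : T.card + Tᶜ.card = m + k := by
      rw [Finset.card_add_card_compl]
      simp
    omega
  rw [hTcard, hScard] at hcard
  exact hcard
end

section
/- Let f be a DS-surjection of arity k and degree m, let j ∈ {1,…,k} with |f⁻¹(j)| ≥ 2, and let x ∈ f⁻¹(j). Then the map f̂ : {1,…,m+k−1} → {1,…,k} defined by f̂(i) = f(i) for i < x and f̂(i) = f(i+1) for i ≥ x (i.e., the sequence f(1)…f(m+k) with the occurrence of j at position x deleted) is a DS-surjection of arity k and degree m−1. (Well-definedness of the face operators ∂_i^{(j)} of the multi-semi-simplicial set underlying 𝒞_k.) -/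
set_option maxHeartbeats 1000000


/-- Well-definedness of the face operators of the multi-semi-simplicial set
underlying the cacti complex `𝒞_k`: if `f` is a DS-surjection of arity `k`
and degree `m`, `j` is a value whose fiber has at least two elements and
`x ∈ f⁻¹(j)`, then deleting the occurrence of `j` at position `x` from the
sequence `f(1)…f(m+k)` yields a DS-surjection of arity `k` and degree `m-1`. -/
theorem face_isDSSurjection (k m : ℕ) (f : Fin (m + k) → Fin k)
    (hf : IsDSSurjection k m f) (j : Fin k)
    (hj : 2 ≤ (Finset.univ.filter fun i => f i = j).card)
    (x : Fin (m + k)) (hx : f x = j) :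
    ∃ hm : 1 ≤ m, IsDSSurjection k (m - 1)
      (fun i : Fin (m - 1 + k) =>
        if (i : ℕ) < (x : ℕ) then f ⟨i, by have := i.isLt; omega⟩
        else f ⟨(i : ℕ) + 1, by have := i.isLt; omega⟩) := by
  obtain ⟨hsurj, hadj, hcomp⟩ := hf
  -- get another preimage of j
  obtain ⟨x₁, hx₁, x₂, hx₂, hne12⟩ := Finset.one_lt_card.mp hj
  simp only [Finset.mem_filter, Finset.mem_univ, true_and] at hx₁ hx₂
  have hx' : ∃ x' : Fin (m + k), x' ≠ x ∧ f x' = j := by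
    rcases eq_or_ne x₁ x with rfl | h
    · exact ⟨x₂, fun h => hne12 h.symm, hx₂⟩
    · exact ⟨x₁, h, hx₁⟩
  obtain ⟨x', hx'ne, hx'j⟩ := hx'
  have hninj : ¬ Function.Injective f := by
    intro hinj
    exact hx'ne (hinj (hx'j.trans hx.symm))
  have hm : 1 ≤ m := by
    have := Fintype.card_lt_of_surjective_not_injective f hsurj hninj
    simp only [Fintype.card_fin] at this
    omega
  have fcast : ∀ {a b : ℕ} (ha : a < m + k) (hb : b < m + k), a = b →
      f ⟨a, ha⟩ = f ⟨b, hb⟩ := by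
    intro a b ha hb h; subst h; rfl
  -- the (opaque) index map
  obtain ⟨T, hTval⟩ : ∃ T : Fin (m - 1 + k) → Fin (m + k), ∀ i : Fin (m - 1 + k),
      ((T i : ℕ) = if (i : ℕ) < (x : ℕ) then (i : ℕ) else (i : ℕ) + 1) := by
    refine ⟨fun i => if h : (i : ℕ) < (x : ℕ) then ⟨i, by have := x.isLt; omega⟩
      else ⟨(i : ℕ) + 1, by have := i.isLt; omega⟩, fun i => ?_⟩
    by_cases h : (i : ℕ) < (x : ℕ) <;> simp [h]
  have hgT : ∀ i : Fin (m - 1 + k),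
      (if (i : ℕ) < (x : ℕ) then f ⟨i, by have := i.isLt; omega⟩
        else f ⟨(i : ℕ) + 1, by have := i.isLt; omega⟩) = f (T i) := by
    intro i
    by_cases h : (i : ℕ) < (x : ℕ)
    · rw [if_pos h]
      exact fcast _ (T i).isLt (by rw [hTval, if_pos h])
    · rw [if_neg h]
      exact fcast _ (T i).isLt (by rw [hTval, if_neg h])
  have hTmono : ∀ u v : Fin (m - 1 + k), u < v → T u < T v := by
    intro u v h
    have hv := Fin.lt_def.mp h
    rw [Fin.lt_def, hTval u, hTval v]
    by_cases h1 : (u : ℕ) < (x : ℕ) <;> by_cases h2 : (v : ℕ) < (x : ℕ) <;>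
      simp only [h1, h2, if_true, if_false] <;> omega
  refine ⟨hm, ?_, ?_, ?_⟩
  · -- surjectivity
    intro y
    have : ∃ i : Fin (m + k), i ≠ x ∧ f i = y := by
      rcases eq_or_ne y j with rfl | hyj
      · exact ⟨x', hx'ne, hx'j⟩
      · obtain ⟨i, hi⟩ := hsurj y
        refine ⟨i, fun h => hyj ?_, hi⟩
        rw [← hi, h, hx]
    obtain ⟨i, hix, hi⟩ := this
    have hixv : (i : ℕ) ≠ (x : ℕ) := fun h => hix (Fin.ext h)
    rcases lt_or_gt_of_ne hixv with hlt | hgt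
    · refine ⟨⟨i, by have := x.isLt; omega⟩, ?_⟩
      show (if (i : ℕ) < (x : ℕ) then f ⟨(i : ℕ), i.isLt⟩
        else f ⟨(i : ℕ) + 1, by have := x.isLt; omega⟩) = y
      rw [if_pos hlt]
      exact hi
    · refine ⟨⟨(i : ℕ) - 1, by have := i.isLt; omega⟩, ?_⟩
      show (if (i : ℕ) - 1 < (x : ℕ) then f ⟨(i : ℕ) - 1, by have := i.isLt; omega⟩
        else f ⟨(i : ℕ) - 1 + 1, by have := i.isLt; omega⟩) = y
      rw [if_neg (by omega)]
      exact (fcast _ i.isLt (by omega)).trans hi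
  · -- adjacency
    intro a ha
    show (if a < (x : ℕ) then f ⟨a, by omega⟩ else f ⟨a + 1, by omega⟩) ≠
      (if a + 1 < (x : ℕ) then f ⟨a + 1, by omega⟩ else f ⟨a + 2, by omega⟩)
    by_cases h1 : a < (x : ℕ) <;> by_cases h2 : a + 1 < (x : ℕ)
    · -- both below x
      rw [if_pos h1, if_pos h2]
      exact hadj a (by omega)
    · -- a + 1 = x : the crucial case
      have hxval : (x : ℕ) = a + 1 := by omega
      rw [if_pos h1, if_neg h2]
      intro heq
      have hxa : x = ⟨a + 1, by omega⟩ := Fin.ext hxval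
      rw [hxa] at hx
      have hvj : f ⟨a, by omega⟩ ≠ j := by
        intro h
        exact hadj a (by omega) (h.trans hx.symm)
      have hx'1 : (x' : ℕ) ≠ a + 1 := fun h => hx'ne (Fin.ext (by omega))
      have hx'0 : (x' : ℕ) ≠ a := by
        intro h
        apply hvj
        rw [← hx'j]
        exact fcast _ _ h.symm
      have hx'2 : (x' : ℕ) ≠ a + 2 := by
        intro h
        apply hvj
        rw [heq, ← hx'j]
        exact fcast _ _ h.symm
      by_cases hlt : (x' : ℕ) < a
      · refine hcomp ⟨x', ⟨a, by omega⟩, ⟨a + 1, by omega⟩, ⟨a + 2, by omega⟩,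
          ?_, ?_, ?_, ?_, ?_, ?_⟩
        · exact Fin.lt_def.mpr hlt
        · exact Fin.mk_lt_mk.mpr (by omega)
        · exact Fin.mk_lt_mk.mpr (by omega)
        · exact hx'j.trans hx.symm
        · exact heq
        · exact fun h => hvj (h.symm.trans hx'j)
      · have hgt : a + 2 < (x' : ℕ) := by omega
        refine hcomp ⟨⟨a, by omega⟩, ⟨a + 1, by omega⟩, ⟨a + 2, by omega⟩, x',
          ?_, ?_, ?_, ?_, ?_, ?_⟩
        · exact Fin.mk_lt_mk.mpr (by omega)
        · exact Fin.mk_lt_mk.mpr (by omega)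
        · exact Fin.lt_def.mpr hgt
        · exact heq
        · exact hx.trans hx'j.symm
        · exact fun h => hvj (h.trans hx)
    · omega
    · -- both ≥ x
      rw [if_neg h1, if_neg h2]
      exact hadj (a + 1) (by omega)
  · -- complexity
    rintro ⟨a, b, c, d, hab, hbc, hcd, h1, h2, h3⟩
    have h1' : f (T a) = f (T c) := (hgT a).symm.trans (h1.trans (hgT c))
    have h2' : f (T b) = f (T d) := (hgT b).symm.trans (h2.trans (hgT d))
    have h3' : f (T a) ≠ f (T b) := fun h =>
      h3 ((hgT a).trans (h.trans (hgT b).symm))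
    exact hcomp ⟨T a, T b, T c, T d, hTmono _ _ hab, hTmono _ _ hbc, hTmono _ _ hcd,
      h1', h2', h3'⟩
end

section
/- Let f be a DS-surjection of arity k and degree m, and g a DS-surjection of arity h and degree n. Define the star product f ⋆ g : {1,…,(m+n)+(k+h)} → {1,…,k+h} by (f ⋆ g)(i) = f(i) for i ≤ m+k, and (f ⋆ g)(i) = g(i − m − k) + k for i > m+k. Then f ⋆ g is a DS-surjection of arity k+h and degree m+n, and the star product is associative: (f ⋆ g) ⋆ e = f ⋆ (g ⋆ e) for DS-surjections f, g, e. -/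
/-- The star product of `f : {1,…,m+k} → {1,…,k}` and `g : {1,…,n+h} → {1,…,h}`:
`(f ⋆ g)(i) = f(i)` for `i ≤ m+k` and `(f ⋆ g)(i) = g(i-m-k) + k` for `i > m+k`
(0-indexed encoding). -/
def starMap (k m h n : ℕ) (f : Fin (m + k) → Fin k) (g : Fin (n + h) → Fin h) :
    Fin (m + n + (k + h)) → Fin (k + h) := fun i =>
  if hi : (i : ℕ) < m + k then Fin.castAdd h (f ⟨i, hi⟩)
  else Fin.natAdd k (g ⟨(i : ℕ) - (m + k), by have := i.isLt; omega⟩)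

lemma starMap_val (k m h n : ℕ) (f : Fin (m + k) → Fin k) (g : Fin (n + h) → Fin h)
    (i : Fin (m + n + (k + h))) :
    (starMap k m h n f g i : ℕ) =
      if hi : (i : ℕ) < m + k then (f ⟨i, hi⟩ : ℕ)
      else k + (g ⟨(i : ℕ) - (m + k), by have := i.isLt; omega⟩ : ℕ) := by
  unfold starMap
  split <;> simp

lemma val_congr {N M : ℕ} (q : Fin N → Fin M) {x y : Fin N} (hxy : (x : ℕ) = (y : ℕ)) :
    (q x : ℕ) = (q y : ℕ) := by rw [Fin.ext hxy]

lemma adj_val {K M : ℕ} (q : Fin (M + K) → Fin K)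
    (hq : ∀ a : ℕ, ∀ ha : a + 1 < M + K, q ⟨a, by omega⟩ ≠ q ⟨a + 1, ha⟩)
    (a b : ℕ) (pa : a < M + K) (pb : b < M + K) (hab : b = a + 1)
    (hE : (q ⟨a, pa⟩ : ℕ) = (q ⟨b, pb⟩ : ℕ)) : False := by
  subst hab
  exact hq a pb (Fin.ext hE)

lemma comp_val {K M : ℕ} (q : Fin (M + K) → Fin K)
    (hq : ¬∃ a b c d : Fin (M + K), a < b ∧ b < c ∧ c < d ∧ q a = q c ∧ q b = q d ∧ q a ≠ q b)
    (a b c d : ℕ) (pa : a < M + K) (pb : b < M + K) (pc : c < M + K) (pd : d < M + K)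
    (hab : a < b) (hbc : b < c) (hcd : c < d)
    (hac : (q ⟨a, pa⟩ : ℕ) = (q ⟨c, pc⟩ : ℕ))
    (hbd : (q ⟨b, pb⟩ : ℕ) = (q ⟨d, pd⟩ : ℕ))
    (hne : (q ⟨a, pa⟩ : ℕ) ≠ (q ⟨b, pb⟩ : ℕ)) : False := by
  exact hq ⟨⟨a, pa⟩, ⟨b, pb⟩, ⟨c, pc⟩, ⟨d, pd⟩, hab, hbc, hcd,
    Fin.ext hac, Fin.ext hbd, fun hE => hne (congrArg Fin.val hE)⟩

/-- The star product of a DS-surjection of arity `k`, degree `m` with one of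
arity `h`, degree `n` is a DS-surjection of arity `k+h` and degree `m+n`, and
the star product is associative (the two iterated star products take the same
value at corresponding indices). -/
theorem starMap_isDSSurjection_and_assoc (k m h n : ℕ)
    (f : Fin (m + k) → Fin k) (g : Fin (n + h) → Fin h)
    (hf : IsDSSurjection k m f) (hg : IsDSSurjection h n g) :
    IsDSSurjection (k + h) (m + n) (starMap k m h n f g) ∧
    (∀ (l p : ℕ) (e : Fin (p + l) → Fin l), IsDSSurjection l p e →
      ∀ i : Fin (m + n + p + (k + h + l)),
        ((starMap (k + h) (m + n) l p (starMap k m h n f g) e i : ℕ) =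
          (starMap k m (h + l) (n + p) f (starMap h n l p g e)
            (Fin.cast (by omega) i) : ℕ))) := by
  obtain ⟨hfs, hfa, hfc⟩ := hf
  obtain ⟨hgs, hga, hgc⟩ := hg
  refine ⟨⟨?_, ?_, ?_⟩, ?_⟩
  · -- surjectivity
    intro y
    by_cases hy : (y : ℕ) < k
    · obtain ⟨x, hx⟩ := hfs ⟨y, hy⟩
      refine ⟨⟨(x : ℕ), by omega⟩, Fin.ext ?_⟩
      rw [starMap_val]
      rw [dif_pos (show ((⟨(x : ℕ), by omega⟩ : Fin (m + n + (k + h))) : ℕ) < m + k from x.isLt)]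
      simp only [Fin.val_mk, Fin.eta, hx]
    · obtain ⟨x, hx⟩ := hgs ⟨(y : ℕ) - k, by have := y.isLt; omega⟩
      refine ⟨⟨m + k + (x : ℕ), by have := x.isLt; omega⟩, Fin.ext ?_⟩
      rw [starMap_val]
      rw [dif_neg (by simp)]
      simp only [Fin.val_mk, Nat.add_sub_cancel_left, Fin.eta, hx]
      have := y.isLt
      omega
  · -- no two adjacent equal
    intro a ha hEq
    have hv := congrArg Fin.val hEq
    rw [starMap_val, starMap_val] at hv
    simp only [Fin.val_mk] at hv
    split_ifs at hv with h1 h2 h2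
    · exact adj_val f hfa a (a + 1) h1 h2 rfl hv
    · have := (f ⟨a, h1⟩).isLt; omega
    · omega
    · exact adj_val g hga (a - (m + k)) (a + 1 - (m + k)) (by omega) (by omega)
        (by omega) (by omega)
  · -- complexity
    rintro ⟨a, b, c, d, hab, hbc, hcd, hac, hbd, hne⟩
    have hvac := congrArg Fin.val hac
    have hvbd := congrArg Fin.val hbd
    have hvne : (starMap k m h n f g a : ℕ) ≠ (starMap k m h n f g b : ℕ) :=
      fun hE => hne (Fin.ext hE)
    rw [starMap_val, starMap_val] at hvac hvbd
    rw [starMap_val, starMap_val] at hvne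
    have hab' : (a : ℕ) < (b : ℕ) := hab
    have hbc' : (b : ℕ) < (c : ℕ) := hbc
    have hcd' : (c : ℕ) < (d : ℕ) := hcd
    by_cases hc1 : (c : ℕ) < m + k
    · have ha1 : (a : ℕ) < m + k := by omega
      have hb1 : (b : ℕ) < m + k := by omega
      rw [dif_pos ha1, dif_pos hc1] at hvac
      rw [dif_pos ha1, dif_pos hb1] at hvne
      rw [dif_pos hb1] at hvbd
      by_cases hd1 : (d : ℕ) < m + k
      · rw [dif_pos hd1] at hvbd
        exact comp_val f hfc a b c d ha1 hb1 hc1 hd1 hab' hbc' hcd' hvac hvbd hvne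
      · rw [dif_neg hd1] at hvbd
        have := (f ⟨(b : ℕ), hb1⟩).isLt; omega
    · by_cases ha1 : (a : ℕ) < m + k
      · rw [dif_pos ha1, dif_neg hc1] at hvac
        have := (f ⟨(a : ℕ), ha1⟩).isLt; omega
      · have hb1 : ¬ (b : ℕ) < m + k := by omega
        have hd1 : ¬ (d : ℕ) < m + k := by omega
        rw [dif_neg ha1, dif_neg hc1] at hvac
        rw [dif_neg hb1, dif_neg hd1] at hvbd
        rw [dif_neg ha1, dif_neg hb1] at hvne
        exact comp_val g hgc ((a : ℕ) - (m + k)) ((b : ℕ) - (m + k)) ((c : ℕ) - (m + k))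
          ((d : ℕ) - (m + k)) (by omega) (by omega) (by omega) (by omega)
          (by omega) (by omega) (by omega)
          (Nat.add_left_cancel hvac) (Nat.add_left_cancel hvbd)
          (fun hE => hvne (by rw [hE]))
  · -- associativity
    intro l p e _ i
    simp only [starMap_val, Fin.coe_cast, Fin.val_mk]
    have hil := i.isLt
    split_ifs with h1 h2 h2 h3 h3 <;>
      first
        | omega
        | rfl
        | (have : (e ⟨(i : ℕ) - (m + n + (k + h)), by omega⟩ : ℕ)
              = (e ⟨(i : ℕ) - (m + k) - (n + h), by omega⟩ : ℕ) := val_congr e (by simp; omega)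
           omega)
end

section
/- Every open-cell datum of arity k ≥ 2 has dimension at most 2k − 3: if (𝒮, (f_S)) is a nested tree on k leaves with each vertex S labelled by a DS-surjection of arity val(S) and degree d_S, then Σ_{S∈𝒮} d_S + |𝒮| − 1 ≤ 2k − 3. (The open moduli space FM'_k has dimension 2k − 3, so the indexing combinatorial data can have dimension at most 2k − 3.) -/
open List

lemma exists_first_split {α : Type*} [DecidableEq α] {a : α} {t : List α} (h : a ∈ t) :
    ∃ u w, t = u ++ a :: w ∧ a ∉ u := by
  induction t with
  | nil => simp at h
  | cons b t ih =>
    by_cases hb : b = a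
    · exact ⟨[], t, by simp [hb], by simp⟩
    · have h' : a ∈ t := by
        rcases List.mem_cons.1 h with h1 | h1
        · exact absurd h1.symm hb
        · exact h1
      obtain ⟨u, w, rfl, hau⟩ := ih h'
      exact ⟨b :: u, w, by simp, by simp [hau]; exact fun h => hb h.symm⟩

lemma ds_list {α : Type*} [DecidableEq α] : ∀ (n : ℕ) (l : List α), l.length ≤ n → l ≠ [] →
    l.Chain' (· ≠ ·) → (∀ x y : α, x ≠ y → ¬ ([x, y, x, y] <+ l)) →
    l.length + 1 ≤ 2 * l.toFinset.card := by
  intro n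
  induction n with
  | zero =>
    intro l hl hne _ _
    exact absurd (List.eq_nil_of_length_eq_zero (Nat.le_zero.1 hl)) hne
  | succ n ih =>
    intro l hlen hne hch hab
    obtain ⟨a, t, rfl⟩ := List.exists_cons_of_ne_nil hne
    by_cases ha : a ∈ t
    · obtain ⟨u, w, rfl, hau⟩ := exists_first_split ha
      have hu_ne : u ≠ [] := by
        rintro rfl
        simp only [List.nil_append] at hch
        exact (List.isChain_cons_cons.1 hch).1 rfl
      -- structure: l = a :: u ++ a :: w
      have hul : u <+ a :: (u ++ a :: w) :=
        (List.sublist_append_left u (a :: w)).cons a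
      have hawl : a :: w <+ a :: (u ++ a :: w) :=
        (List.sublist_append_right u (a :: w)).cons a
      have hchu : u.Chain' (· ≠ ·) := hch.infix ⟨[a], a :: w, by simp⟩
      have hchaw : (a :: w).Chain' (· ≠ ·) := hch.suffix ⟨a :: u, by simp⟩
      have habu : ∀ x y : α, x ≠ y → ¬ ([x, y, x, y] <+ u) :=
        fun x y hxy hs => hab x y hxy (hs.trans hul)
      have habaw : ∀ x y : α, x ≠ y → ¬ ([x, y, x, y] <+ a :: w) :=
        fun x y hxy hs => hab x y hxy (hs.trans hawl)
      have hdisj : ∀ y ∈ u, y ∉ a :: w := by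
        intro y hyu hyaw
        have hya : y ≠ a := fun h => hau (h ▸ hyu)
        rcases List.mem_cons.1 hyaw with h1 | h1
        · exact hya h1
        · have hs : [y] ++ ([a] ++ [y]) <+ u ++ ([a] ++ w) :=
            (List.singleton_sublist.2 hyu).append
              ((List.Sublist.refl [a]).append (List.singleton_sublist.2 h1))
          have : [a, y, a, y] <+ a :: (u ++ a :: w) := hs.cons₂ a
          exact hab a y (Ne.symm hya) this
      have hlu : u.length ≤ n := by
        have := @List.length_cons _ a (u ++ a :: w)
        simp only [List.length_append, List.length_cons] at hlen ⊢
        omega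
      have hlaw : (a :: w).length ≤ n := by
        have h1 : 1 ≤ u.length := List.length_pos_iff.2 hu_ne
        simp only [List.length_append, List.length_cons] at hlen ⊢
        omega
      have ihu := ih u hlu hu_ne hchu habu
      have ihaw := ih (a :: w) hlaw (by simp) hchaw habaw
      have hfin : (a :: (u ++ a :: w)).toFinset = u.toFinset ∪ (a :: w).toFinset := by
        ext x
        simp [List.mem_toFinset, or_comm, or_assoc, or_left_comm]
      have hdisj' : Disjoint u.toFinset (a :: w).toFinset := by
        rw [Finset.disjoint_left]
        intro x hx hx'
        exact hdisj x (List.mem_toFinset.1 hx) (List.mem_toFinset.1 hx')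
      rw [hfin, Finset.card_union_of_disjoint hdisj']
      simp only [List.length_cons, List.length_append, List.length_cons] at *
      omega
    · rcases List.eq_nil_or_concat t with rfl | _
      · simp
      by_cases ht : t = []
      · subst ht; simp
      have hcht : t.Chain' (· ≠ ·) := hch.tail
      have habt : ∀ x y : α, x ≠ y → ¬ ([x, y, x, y] <+ t) :=
        fun x y hxy hs => hab x y hxy (hs.cons a)
      have hlt : t.length ≤ n := by simp at hlen; omega
      have iht := ih t hlt ht hcht habt
      have : (a :: t).toFinset = insert a t.toFinset := by simp
      rw [this, Finset.card_insert_of_notMem (by simpa using ha)]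
      simp only [List.length_cons]
      omega



/-- A nested tree on `k` leaves. -/
def IsNestedTree (k : ℕ) (𝒮 : Finset (Finset (Fin k))) : Prop :=
  (∀ A ∈ 𝒮, 2 ≤ A.card) ∧ Finset.univ ∈ 𝒮 ∧
    ∀ A ∈ 𝒮, ∀ B ∈ 𝒮, Disjoint A B ∨ A ⊆ B ∨ B ⊆ A

/-- The maximal elements of `𝒮` properly contained in `S`. -/
def maximalBelow (k : ℕ) (𝒮 : Finset (Finset (Fin k))) (S : Finset (Fin k)) :
    Finset (Finset (Fin k)) :=
  𝒮.filter fun T => T ⊂ S ∧ ∀ U ∈ 𝒮, U ⊂ S → T ⊆ U → U = T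

/-- The elements of `S` not belonging to any element of `𝒮` properly contained in `S`. -/
def freeLeaves (k : ℕ) (𝒮 : Finset (Finset (Fin k))) (S : Finset (Fin k)) :
    Finset (Fin k) :=
  S.filter fun i => ∀ T ∈ 𝒮, T ⊂ S → i ∉ T

/-- The valence of a vertex `S` of a nested tree `𝒮`: the number of maximal
elements of `𝒮` properly contained in `S` plus the number of elements of `S`
not belonging to any element of `𝒮` properly contained in `S`. -/
def valence (k : ℕ) (𝒮 : Finset (Finset (Fin k))) (S : Finset (Fin k)) : ℕ :=
  (maximalBelow k 𝒮 S).card + (freeLeaves k 𝒮 S).card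

lemma ds_degree_lt {v m : ℕ} (hv : 1 ≤ v) (f : Fin (m + v) → Fin v)
    (hf : IsDSSurjection v m f) : m + 1 ≤ v := by
  obtain ⟨hsurj, hadj, habab⟩ := hf
  set l : List (Fin v) := List.ofFn f with hl
  have hlen : l.length = m + v := List.length_ofFn
  have hne : l ≠ [] := by
    intro h
    rw [h] at hlen
    simp at hlen
    omega
  have hget : ∀ i : Fin l.length, l.get i = f (Fin.cast hlen i) := by
    intro i
    exact List.get_ofFn f i
  have hch : l.Chain' (· ≠ ·) := by
    show List.IsChain (· ≠ ·) l; rw [List.isChain_iff_getElem]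
    intro i hi
    simp only [hl, List.getElem_ofFn]
    have hi' : i + 1 < m + v := by omega
    exact hadj i hi'
  have hab : ∀ x y : Fin v, x ≠ y → ¬ ([x, y, x, y] <+ l) := by
    intro x y hxy hs
    rw [List.sublist_iff_exists_fin_orderEmbedding_get_eq] at hs
    obtain ⟨e, he⟩ := hs
    apply habab
    have g : ∀ ix : Fin ([x, y, x, y].length), f (Fin.cast hlen (e ix)) = [x, y, x, y].get ix :=
      fun ix => ((he ix).trans (hget (e ix))).symm
    refine ⟨Fin.cast hlen (e ⟨0, by norm_num⟩), Fin.cast hlen (e ⟨1, by norm_num⟩),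
      Fin.cast hlen (e ⟨2, by norm_num⟩), Fin.cast hlen (e ⟨3, by norm_num⟩),
      ?_, ?_, ?_, ?_, ?_, ?_⟩
    · exact e.strictMono (by norm_num [Fin.lt_def])
    · exact e.strictMono (by norm_num [Fin.lt_def])
    · exact e.strictMono (by norm_num [Fin.lt_def])
    · exact (g ⟨0, by norm_num⟩).trans ((g ⟨2, by norm_num⟩).symm)
    · exact (g ⟨1, by norm_num⟩).trans ((g ⟨3, by norm_num⟩).symm)
    · exact fun h => hxy (((g ⟨0, by norm_num⟩).symm.trans h).trans (g ⟨1, by norm_num⟩))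
  have hcard : l.toFinset = Finset.univ := by
    apply Finset.eq_univ_of_forall
    intro x
    rw [List.mem_toFinset]
    obtain ⟨i, hi⟩ := hsurj x
    rw [hl, List.mem_ofFn]
    exact ⟨i, hi⟩
  have key := ds_list l.length l le_rfl hne hch hab
  rw [hcard, Finset.card_univ, Fintype.card_fin] at key
  omega

lemma exists_maximalBelow_superset {k : ℕ} {𝒮 : Finset (Finset (Fin k))}
    {S T₀ : Finset (Fin k)} (hT₀ : T₀ ∈ 𝒮) (hTS : T₀ ⊂ S) :
    ∃ M ∈ maximalBelow k 𝒮 S, T₀ ⊆ M := by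
  set C : Finset (Finset (Fin k)) := 𝒮.filter fun U => U ⊂ S ∧ T₀ ⊆ U with hC
  have hCne : C.Nonempty := ⟨T₀, by simp [hC, hT₀, hTS]⟩
  obtain ⟨M, hMC, hMmax⟩ := C.exists_maximal hCne
  simp only [hC, Finset.mem_filter] at hMC
  refine ⟨M, ?_, hMC.2.2⟩
  simp only [maximalBelow, Finset.mem_filter]
  refine ⟨hMC.1, hMC.2.1, fun U hU hUS hMU => ?_⟩
  have hUC : U ∈ C := by
    simp only [hC, Finset.mem_filter]
    exact ⟨hU, hUS, hMC.2.2.trans hMU⟩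
  by_contra hne
  exact hne (le_antisymm (hMmax hUC hMU) hMU)

lemma two_le_valence {k : ℕ} {𝒮 : Finset (Finset (Fin k))} (h𝒮 : IsNestedTree k 𝒮)
    {S : Finset (Fin k)} (hS : S ∈ 𝒮) : 2 ≤ valence k 𝒮 S := by
  obtain ⟨hcard, huniv, hnest⟩ := h𝒮
  by_cases hex : ∃ T ∈ 𝒮, T ⊂ S
  · obtain ⟨T₀, hT₀, hT₀S⟩ := hex
    obtain ⟨M, hM, _⟩ := exists_maximalBelow_superset hT₀ hT₀S
    have hMS : M ⊂ S := by
      simp only [maximalBelow, Finset.mem_filter] at hM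
      exact hM.2.1
    obtain ⟨i, hiS, hiM⟩ := Finset.exists_of_ssubset hMS
    by_cases hfree : i ∈ freeLeaves k 𝒮 S
    · have h1 : 1 ≤ (maximalBelow k 𝒮 S).card := Finset.card_pos.2 ⟨M, hM⟩
      have h2 : 1 ≤ (freeLeaves k 𝒮 S).card := Finset.card_pos.2 ⟨i, hfree⟩
      unfold valence; omega
    · simp only [freeLeaves, Finset.mem_filter, hiS, true_and, not_forall] at hfree
      obtain ⟨U, hU, hUS, hiU⟩ := hfree
      have hiU' : i ∈ U := by tauto
      have hUS' : U ⊂ S := by tauto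
      obtain ⟨M', hM', hUM'⟩ := exists_maximalBelow_superset hU hUS'
      have hMM' : M ≠ M' := fun h => hiM (h ▸ hUM' hiU')
      have : 2 ≤ (maximalBelow k 𝒮 S).card := Finset.one_lt_card.2 ⟨M, hM, M', hM', hMM'⟩
      unfold valence; omega
  · push_neg at hex
    have hfl : freeLeaves k 𝒮 S = S := by
      apply Finset.filter_true_of_mem
      intro i _ T hT hTS
      exact absurd hTS (hex T hT)
    have : 2 ≤ (freeLeaves k 𝒮 S).card := by rw [hfl]; exact hcard S hS
    unfold valence; omega

lemma maximalBelow_disjoint {k : ℕ} {𝒮 : Finset (Finset (Fin k))} (h𝒮 : IsNestedTree k 𝒮)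
    {S S' : Finset (Fin k)} (hS : S ∈ 𝒮) (hS' : S' ∈ 𝒮) (hne : S ≠ S') :
    Disjoint (maximalBelow k 𝒮 S) (maximalBelow k 𝒮 S') := by
  obtain ⟨hcard, huniv, hnest⟩ := h𝒮
  rw [Finset.disjoint_left]
  intro T hT hT'
  simp only [maximalBelow, Finset.mem_filter] at hT hT'
  obtain ⟨hT𝒮, hTS, hTmax⟩ := hT
  obtain ⟨_, hTS', hTmax'⟩ := hT'
  have hTne : T.Nonempty := Finset.card_pos.1 (by have := hcard T hT𝒮; omega)
  obtain ⟨x, hx⟩ := hTne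
  have hnd : ¬ Disjoint S S' := fun h =>
    Finset.disjoint_left.1 h (hTS.1 hx) (hTS'.1 hx)
  rcases hnest S hS S' hS' with h | h | h
  · exact hnd h
  · have hSS' : S ⊂ S' := lt_of_le_of_ne h hne
    have := hTmax' S hS hSS' hTS.1
    exact absurd (this ▸ hTS) (lt_irrefl S)
  · have hSS' : S' ⊂ S := lt_of_le_of_ne h (Ne.symm hne)
    have := hTmax S' hS' hSS' hTS'.1
    exact absurd (this ▸ hTS') (lt_irrefl S')

lemma freeLeaves_disjoint {k : ℕ} {𝒮 : Finset (Finset (Fin k))} (h𝒮 : IsNestedTree k 𝒮)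
    {S S' : Finset (Fin k)} (hS : S ∈ 𝒮) (hS' : S' ∈ 𝒮) (hne : S ≠ S') :
    Disjoint (freeLeaves k 𝒮 S) (freeLeaves k 𝒮 S') := by
  obtain ⟨hcard, huniv, hnest⟩ := h𝒮
  rw [Finset.disjoint_left]
  intro i hi hi'
  simp only [freeLeaves, Finset.mem_filter] at hi hi'
  have hnd : ¬ Disjoint S S' := fun h => Finset.disjoint_left.1 h hi.1 hi'.1
  rcases hnest S hS S' hS' with h | h | h
  · exact hnd h
  · exact hi'.2 S hS (lt_of_le_of_ne h hne) hi.1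
  · exact hi.2 S' hS' (lt_of_le_of_ne h (Ne.symm hne)) hi'.1

/-- Every open-cell datum of arity `k ≥ 2` has dimension at most `2k - 3`:
if `𝒮` is a nested tree on `k` leaves and each vertex `S ∈ 𝒮` is labelled by
a DS-surjection of arity `valence 𝒮 S` and degree `d S`, then
`Σ_{S ∈ 𝒮} d S + |𝒮| - 1 ≤ 2k - 3`. -/
theorem openCell_dim_le (k : ℕ) (hk : 2 ≤ k)
    (𝒮 : Finset (Finset (Fin k))) (h𝒮 : IsNestedTree k 𝒮)
    (d : Finset (Fin k) → ℕ)
    (hlabel : ∀ S ∈ 𝒮, ∃ f : Fin (d S + valence k 𝒮 S) → Fin (valence k 𝒮 S),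
      IsDSSurjection (valence k 𝒮 S) (d S) f) :
    (∑ S ∈ 𝒮, d S) + 𝒮.card - 1 ≤ 2 * k - 3 := by
  have hval2 : ∀ S ∈ 𝒮, 2 ≤ valence k 𝒮 S := fun S hS => two_le_valence h𝒮 hS
  have hdeg : ∀ S ∈ 𝒮, d S + 1 ≤ valence k 𝒮 S := by
    intro S hS
    obtain ⟨f, hf⟩ := hlabel S hS
    exact ds_degree_lt (by have := hval2 S hS; omega) f hf
  have hmb : ∑ S ∈ 𝒮, (maximalBelow k 𝒮 S).card ≤ 𝒮.card - 1 := by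
    rw [← Finset.card_biUnion (fun S hS S' hS' hne => maximalBelow_disjoint h𝒮 hS hS' hne)]
    have hsub : 𝒮.biUnion (maximalBelow k 𝒮) ⊆ 𝒮.erase Finset.univ := by
      intro T hT
      rw [Finset.mem_biUnion] at hT
      obtain ⟨S, hS, hTS⟩ := hT
      simp only [maximalBelow, Finset.mem_filter] at hTS
      rw [Finset.mem_erase]
      refine ⟨?_, hTS.1⟩
      rintro rfl
      have := hTS.2.1
      rw [Finset.ssubset_def] at this
      exact this.2 (Finset.subset_univ S)
    calc (𝒮.biUnion (maximalBelow k 𝒮)).card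
        ≤ (𝒮.erase Finset.univ).card := Finset.card_le_card hsub
      _ = 𝒮.card - 1 := Finset.card_erase_of_mem h𝒮.2.1
  have hfl : ∑ S ∈ 𝒮, (freeLeaves k 𝒮 S).card ≤ k := by
    rw [← Finset.card_biUnion (fun S hS S' hS' hne => freeLeaves_disjoint h𝒮 hS hS' hne)]
    calc (𝒮.biUnion (freeLeaves k 𝒮)).card
        ≤ Fintype.card (Fin k) := Finset.card_le_univ _
      _ = k := Fintype.card_fin k
  have hsum1 : ∑ S ∈ 𝒮, (d S + 1) ≤ ∑ S ∈ 𝒮, valence k 𝒮 S := Finset.sum_le_sum hdeg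
  have hsum2 : ∑ S ∈ 𝒮, valence k 𝒮 S ≤ (𝒮.card - 1) + k := by
    unfold valence
    rw [Finset.sum_add_distrib]
    omega
  have hsum3 : 2 * 𝒮.card ≤ ∑ S ∈ 𝒮, valence k 𝒮 S := by
    calc 2 * 𝒮.card = ∑ _S ∈ 𝒮, 2 := by rw [Finset.sum_const, smul_eq_mul, mul_comm]
      _ ≤ _ := Finset.sum_le_sum hval2
  have hn : 1 ≤ 𝒮.card := Finset.card_pos.2 ⟨Finset.univ, h𝒮.2.1⟩
  have hd : ∑ S ∈ 𝒮, (d S + 1) = (∑ S ∈ 𝒮, d S) + 𝒮.card := by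
    rw [Finset.sum_add_distrib, Finset.sum_const, smul_eq_mul, mul_one]
  omega
end
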